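/- For any integer d ≥ 3 and the choice ℓ = 1 with ℓ₁ = ℓ₃ = 1, ℓ₂ = 2, the real coefficients η₁ = 2243/1350 + 440521/(675√2991111), α₁ = 3(5161 + √2991111)/15869, η₂ = −(12544/675)·2^{d−3}, α₂ = 45/28, η₃ = 2243/1350 − 440521/(675√2991111), α₃ = 3(5161 − √2991111)/15869 satisfy: η₁ + η₂/2^d + η₃ = 1; η₁α₁/2 + η₂α₂/(2^{d−1}·6) + η₃α₃/2 = 1/2; η₁α₁²/6 + η₂α₂²/(2^{d−1}·24) + η₃α₃²/6 = 1/6; η₁α₁²/4 + η₂α₂²/(2^{d−2}·36) + η₃α₃²/4 = 1/3. -/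

import Mathlib

theorem three_term_splitting_coeffs_ell_one (d : ℕ) (hd : 3 ≤ d) :
    let η₁ : ℝ := 2243/1350 + 440521 / (675 * Real.sqrt 2991111)
    let α₁ : ℝ := 3 * (5161 + Real.sqrt 2991111) / 15869
    let η₂ : ℝ := -(12544/675) * 2 ^ (d - 3)
    let α₂ : ℝ := 45/28
    let η₃ : ℝ := 2243/1350 - 440521 / (675 * Real.sqrt 2991111)
    let α₃ : ℝ := 3 * (5161 - Real.sqrt 2991111) / 15869
    η₁ + η₂ / 2 ^ d + η₃ = 1 ∧
    η₁ * α₁ / 2 + η₂ * α₂ / (2 ^ (d - 1) * 6) + η₃ * α₃ / 2 = 1/2 ∧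
    η₁ * α₁ ^ 2 / 6 + η₂ * α₂ ^ 2 / (2 ^ (d - 1) * 24) + η₃ * α₃ ^ 2 / 6 = 1/6 ∧
    η₁ * α₁ ^ 2 / 4 + η₂ * α₂ ^ 2 / (2 ^ (d - 2) * 36) + η₃ * α₃ ^ 2 / 4 = 1/3 := by
  obtain ⟨k, rfl⟩ : ∃ k, d = k + 3 := ⟨d - 3, by omega⟩
  have h1 : k + 3 - 3 = k := by omega
  have h2 : k + 3 - 1 = k + 2 := by omega
  have h3 : k + 3 - 2 = k + 1 := by omega
  have hs : Real.sqrt 2991111 ^ 2 = 2991111 := Real.sq_sqrt (by norm_num)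
  have hs0 : Real.sqrt 2991111 ≠ 0 := by positivity
  have hp : (2:ℝ) ^ k ≠ 0 := by positivity
  simp only [h1, h2, h3, pow_add, pow_succ]
  refine ⟨?_, ?_, ?_, ?_⟩ <;> field_simp
  · nlinarith [hs]
  · nlinarith [hs]
  · linear_combination (2051128396800 * Real.sqrt 2991111) * hs
  · linear_combination (4615038892800 * Real.sqrt 2991111) * hs
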